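/- Let ψ : G → G be a commutator-central endomorphism of a group G and let α ∈ 𝓔. Write g ∘ h := g ∘_{ψ,α} h, and for x ∈ G write S(x) := ψ_α(x)⁻¹ · x⁻¹ · ψ_α(x) (the inverse of x in (G, ∘)). Define R, R' : G × G → G × G by R(g,h) = (g⁻¹·(g ∘ h), S(g⁻¹·(g ∘ h)) ∘ g ∘ h) and R'(g,h) = ((g ∘ h)·g⁻¹, S((g ∘ h)·g⁻¹) ∘ g ∘ h). Then R' is a two-sided inverse of R: R' ∘ R = id and R ∘ R' = id on G × G. -/

import Mathlib

/-- Evaluation of an element of the free group `𝓔 = FreeGroup (Monoid.End G)`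
at an element `g : G`: the image of `α` under the homomorphism `𝓔 → G`
given by `FreeGroup.lift (fun φ => φ g)`. -/
def evalE {G : Type*} [Group G] (α : FreeGroup (Monoid.End G)) (g : G) : G :=
  FreeGroup.lift (fun φ : Monoid.End G => φ g) α

/-- The binary operation `g ∘_{ψ,α} h = g · ψ_α(g) · h · ψ_α(g)⁻¹`, where
`ψ_α(g) = ψ (α(g))`. -/
def op {G : Type*} [Group G] (ψ : Monoid.End G) (α : FreeGroup (Monoid.End G)) (g h : G) : G :=
  g * ψ (evalE α g) * h * (ψ (evalE α g))⁻¹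

/-- The `∘_{ψ,α}`-inverse of `x`, namely `ψ_α(x)⁻¹ · x⁻¹ · ψ_α(x)`. -/
def opInv {G : Type*} [Group G] (ψ : Monoid.End G) (α : FreeGroup (Monoid.End G)) (x : G) : G :=
  (ψ (evalE α x))⁻¹ * x⁻¹ * ψ (evalE α x)

/-- The Yang–Baxter map `R(g,h) = (g⁻¹·(g∘h), S(g⁻¹·(g∘h)) ∘ g ∘ h)` associated to
the brace `(G, ·, ∘_{ψ,α})`, where `S` is the `∘`-inverse. -/
def ybR {G : Type*} [Group G] (ψ : Monoid.End G) (α : FreeGroup (Monoid.End G))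
    (p : G × G) : G × G :=
  (p.1⁻¹ * op ψ α p.1 p.2,
    op ψ α (opInv ψ α (p.1⁻¹ * op ψ α p.1 p.2)) (op ψ α p.1 p.2))

/-- The map `R'(g,h) = ((g∘h)·g⁻¹, S((g∘h)·g⁻¹) ∘ g ∘ h)`. -/
def ybR' {G : Type*} [Group G] (ψ : Monoid.End G) (α : FreeGroup (Monoid.End G))
    (p : G × G) : G × G :=
  (op ψ α p.1 p.2 * p.1⁻¹,
    op ψ α (opInv ψ α (op ψ α p.1 p.2 * p.1⁻¹)) (op ψ α p.1 p.2))

open scoped commutatorElement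

section Aux
variable {G : Type*} [Group G]

private lemma lift_pure' {α : Type*} {H : Type*} [Group H] (f : α → H) (x : α) :
    FreeGroup.lift f (pure x) = f x := FreeGroup.lift_apply_of

private lemma evalE_one' (α : FreeGroup (Monoid.End G)) : evalE α (1 : G) = 1 := by
  have h : (fun φ : Monoid.End G => φ (1 : G)) = fun _ => (1 : G) := by
    funext φ; simp
  have h2 : FreeGroup.lift (fun _ : Monoid.End G => (1 : G)) = 1 :=
    FreeGroup.ext_hom _ _ (by simp)
  rw [evalE, h, h2]; rfl

private lemma evalE_ab' (α : FreeGroup (Monoid.End G)) (x y : G) :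
    Abelianization.of (evalE α (x * y))
      = Abelianization.of (evalE α x) * Abelianization.of (evalE α y) := by
  induction α using FreeGroup.induction_on with
  | C1 => simp [evalE]
  | of φ => simp only [evalE, FreeGroup.lift_apply_of, map_mul]
  | inv_of φ ih => simp only [evalE, map_inv] at *; rw [ih]; simp [mul_comm]
  | mul a b iha ihb =>
      simp only [evalE, map_mul] at *
      rw [iha, ihb, mul_mul_mul_comm]

private lemma evalE_mem_commutator' (α : FreeGroup (Monoid.End G)) {x : G}
    (hx : x ∈ commutator G) : evalE α x ∈ commutator G := by
  induction α using FreeGroup.induction_on with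
  | C1 => simpa [evalE] using Subgroup.one_mem _
  | of φ =>
      rw [evalE, FreeGroup.lift_apply_of]
      have : Subgroup.map (φ : G →* G) (commutator G) ≤ commutator G := by
        rw [commutator_def]; erw [Subgroup.map_commutator]
        exact Subgroup.commutator_mono le_top le_top
      exact this ⟨x, hx, rfl⟩
  | inv_of φ ih => simp only [evalE, map_inv] at *; exact Subgroup.inv_mem _ ih
  | mul a b iha ihb => simp only [evalE, map_mul] at *; exact Subgroup.mul_mem _ iha ihb

private lemma ab_eq_iff' (x y : G) :
    Abelianization.of x = Abelianization.of y ↔ x⁻¹ * y ∈ commutator G :=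
  QuotientGroup.eq (s := commutator G)

variable (ψ : Monoid.End G) (hψ : ∀ g h : G, ψ ⁅g, h⁆ ∈ Subgroup.center G)
  (α : FreeGroup (Monoid.End G))
include hψ

private lemma psi_comm_central {c : G} (hc : c ∈ commutator G) :
    ψ c ∈ Subgroup.center G := by
  have h : commutator G ≤ (Subgroup.center G).comap (ψ : G →* G) := by
    rw [commutator_def]
    exact Subgroup.commutator_le.mpr fun g _ h _ => hψ g h
  exact h hc

private lemma T_congr {x y : G} (hxy : x⁻¹ * y ∈ commutator G) :
    ∃ z ∈ Subgroup.center G, ψ (evalE α y) = ψ (evalE α x) * z := by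
  have h1 : Abelianization.of (evalE α x) = Abelianization.of (evalE α y) := by
    have hy : y = x * (x⁻¹ * y) := by group
    rw [hy, evalE_ab']
    have h0 : Abelianization.of (evalE α (x⁻¹ * y)) = Abelianization.of (1 : G) := by
      rw [eq_comm, ab_eq_iff']
      simpa using evalE_mem_commutator' α hxy
    rw [h0]; simp
  rw [ab_eq_iff'] at h1
  refine ⟨ψ ((evalE α x)⁻¹ * evalE α y), psi_comm_central ψ hψ h1, ?_⟩
  rw [← map_mul]
  congr 1
  group

private lemma T_mul (x y : G) :
    ∃ z ∈ Subgroup.center G,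
      ψ (evalE α (x * y)) = ψ (evalE α x) * ψ (evalE α y) * z := by
  have h1 : Abelianization.of (evalE α x * evalE α y)
      = Abelianization.of (evalE α (x * y)) := by
    rw [map_mul, evalE_ab']
  rw [ab_eq_iff'] at h1
  refine ⟨ψ ((evalE α x * evalE α y)⁻¹ * evalE α (x * y)),
    psi_comm_central ψ hψ h1, ?_⟩
  rw [← map_mul, ← map_mul]
  congr 1
  group

private lemma T_op (g h : G) :
    ∃ z ∈ Subgroup.center G,
      ψ (evalE α (op ψ α g h)) = ψ (evalE α g) * ψ (evalE α h) * z := by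
  have hc : (g * h)⁻¹ * op ψ α g h ∈ commutator G := by
    have he : (g * h)⁻¹ * op ψ α g h = ⁅h⁻¹, ψ (evalE α g)⁆ := by
      rw [op, commutatorElement_def]; group
    rw [he]
    exact Subgroup.commutator_mem_commutator (Subgroup.mem_top _) (Subgroup.mem_top _)
  obtain ⟨z1, hz1, h1⟩ := T_congr ψ hψ α hc
  obtain ⟨z2, hz2, h2⟩ := T_mul ψ hψ α g h
  exact ⟨z2 * z1, Subgroup.mul_mem _ hz2 hz1, by rw [h1, h2]; group⟩

private lemma T_opInv (x : G) :
    ∃ z ∈ Subgroup.center G,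
      ψ (evalE α (opInv ψ α x)) = (ψ (evalE α x))⁻¹ * z := by
  obtain ⟨z2, hz2, h2⟩ := T_mul ψ hψ α x x⁻¹
  rw [mul_inv_cancel, evalE_one', map_one] at h2
  have hTinv : ψ (evalE α x⁻¹) = (ψ (evalE α x))⁻¹ * z2⁻¹ := by
    calc ψ (evalE α x⁻¹)
        = (ψ (evalE α x))⁻¹ * (ψ (evalE α x) * ψ (evalE α x⁻¹) * z2) * z2⁻¹ := by group
      _ = (ψ (evalE α x))⁻¹ * 1 * z2⁻¹ := by rw [← h2]
      _ = (ψ (evalE α x))⁻¹ * z2⁻¹ := by group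
  have hc : (x⁻¹)⁻¹ * opInv ψ α x ∈ commutator G := by
    have he : (x⁻¹)⁻¹ * opInv ψ α x = ⁅x, (ψ (evalE α x))⁻¹⁆ := by
      rw [opInv, commutatorElement_def]; group
    rw [he]
    exact Subgroup.commutator_mem_commutator (Subgroup.mem_top _) (Subgroup.mem_top _)
  obtain ⟨z1, hz1, h1⟩ := T_congr ψ hψ α hc
  refine ⟨z2⁻¹ * z1, Subgroup.mul_mem _ (Subgroup.inv_mem _ hz2) hz1, ?_⟩
  rw [h1, hTinv]; group

/-- conjugation by `u*z` with `z` commuting with `k` equals conjugation by `u`. -/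
private lemma op_congr (a b u z : G) (hz : z * b = b * z)
    (hT : ψ (evalE α a) = u * z) :
    op ψ α a b = a * u * b * u⁻¹ := by
  rw [op, hT]
  calc a * (u * z) * b * (u * z)⁻¹ = a * u * (z * b) * z⁻¹ * u⁻¹ := by group
    _ = a * u * (b * z) * z⁻¹ * u⁻¹ := by rw [hz]
    _ = a * u * b * u⁻¹ := by group

private lemma op_one_left (h : G) : op ψ α 1 h = h := by
  simp [op, evalE_one']

private lemma op_inv_right (x : G) : op ψ α x (opInv ψ α x) = 1 := by
  rw [op, opInv]; group

private lemma op_inv_left (x : G) : op ψ α (opInv ψ α x) x = 1 := by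
  obtain ⟨z, hz, hT⟩ := T_opInv ψ hψ α x
  rw [op_congr ψ hψ α _ _ _ _ ((Subgroup.mem_center_iff.mp hz x).symm) hT, opInv]
  group

private lemma op_assoc (g h k : G) :
    op ψ α (op ψ α g h) k = op ψ α g (op ψ α h k) := by
  obtain ⟨z, hz, hT⟩ := T_op ψ hψ α g h
  rw [op_congr ψ hψ α _ _ _ _ ((Subgroup.mem_center_iff.mp hz k).symm) hT]
  simp only [op]
  group

private lemma opInv_op (a k : G) :
    op ψ α (opInv ψ α a) (op ψ α a k) = k := by
  rw [← op_assoc ψ hψ α, op_inv_left ψ hψ α, op_one_left ψ hψ α]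

private lemma op_opInv_op (a k : G) :
    op ψ α a (op ψ α (opInv ψ α a) k) = k := by
  rw [← op_assoc ψ hψ α, op_inv_right ψ hψ α, op_one_left ψ hψ α]

end Aux

/-- `R'` is a two-sided inverse of `R`. -/
theorem ybR'_inverse {G : Type*} [Group G]
    (ψ : Monoid.End G) (hψ : ∀ g h : G, ψ ⁅g, h⁆ ∈ Subgroup.center G)
    (α : FreeGroup (Monoid.End G)) :
    ybR' ψ α ∘ ybR ψ α = id ∧ ybR ψ α ∘ ybR' ψ α = id := by
  constructor
  · funext p
    obtain ⟨g, h⟩ := p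
    simp only [Function.comp_apply, ybR, ybR', id_eq]
    set a := g⁻¹ * op ψ α g h with ha
    have hab : op ψ α a (op ψ α (opInv ψ α a) (op ψ α g h)) = op ψ α g h :=
      op_opInv_op ψ hψ α a (op ψ α g h)
    rw [hab]
    have hfst : op ψ α g h * a⁻¹ = g := by rw [ha]; group
    rw [hfst]
    have hsnd : op ψ α (opInv ψ α g) (op ψ α g h) = h := opInv_op ψ hψ α g h
    rw [hsnd]
  · funext p
    obtain ⟨g, h⟩ := p
    simp only [Function.comp_apply, ybR, ybR', id_eq]
    set a := op ψ α g h * g⁻¹ with ha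
    have hab : op ψ α a (op ψ α (opInv ψ α a) (op ψ α g h)) = op ψ α g h :=
      op_opInv_op ψ hψ α a (op ψ α g h)
    rw [hab]
    have hfst : a⁻¹ * op ψ α g h = g := by rw [ha]; group
    rw [hfst]
    have hsnd : op ψ α (opInv ψ α g) (op ψ α g h) = h := opInv_op ψ hψ α g h
    rw [hsnd]
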